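/- Under Assumption 1, assume κ > 0, μ ≠ 0 and ε ≤ μ. Set p = diag(X_opt) for an optimal solution X_opt of P(A,r). Then each anchor T_j = {u : ||a_u − w_j||_1 ≤ 2μ} satisfies score(T_j, p) = Σ_{u∈T_j} p(u) ≥ 1 − 16ε/(κμ(1−ε)). -/

import Mathlib

noncomputable section
open Matrix
open scoped Classical

/-- Entrywise L1 norm of a vector. -/
def l1 {α : Type*} [Fintype α] (v : α → ℝ) : ℝ := ∑ i, |v i|

/-- Induced L1 norm of a matrix (maximum column sum of absolute values). -/
def ml1 {α β : Type*} [Fintype α] [Fintype β] (M : Matrix α β ℝ) : ℝ :=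
  sSup (Set.range fun j => ∑ i, |M i j|)

/-- Feasible set of problem P(A,r). -/
def Feas {ι : Type*} [Fintype ι] [DecidableEq ι] (X : Matrix ι ι ℝ) (r : ℕ) : Prop :=
  Matrix.trace X = (r : ℝ) ∧ (∀ i, X i i ≤ 1) ∧ (∀ i j, 0 ≤ X i j) ∧
    (∀ i j, X i j ≤ X i i)

/-- κ(W) = min over j of min over nonnegative z (supported off j) of
    ‖w_j − W(:,R∖{j}) z‖₁. -/
def kappa {d r : ℕ} (W : Matrix (Fin d) (Fin r) ℝ) : ℝ :=
  sInf {c | ∃ (j : Fin r) (z : Fin r → ℝ), (∀ k, 0 ≤ z k) ∧ z j = 0 ∧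
    c = l1 (fun i => W i j - ∑ k, W i k * z k)}

/-- ω(W) = min over distinct pairs of ‖w_{j₁} − w_{j₂}‖₁. -/
def omegaW {d r : ℕ} (W : Matrix (Fin d) (Fin r) ℝ) : ℝ :=
  sInf {c | ∃ j₁ j₂ : Fin r, j₁ ≠ j₂ ∧ c = l1 (fun i => W i j₁ - W i j₂)}

/-- β = maximum entry of H̄. -/
def betaH {r m : ℕ} (Hb : Matrix (Fin r) (Fin m) ℝ) : ℝ :=
  sSup (Set.range fun p : Fin r × Fin m => Hb p.1 p.2)

lemma l1_nonneg {α : Type*} [Fintype α] (v : α → ℝ) : 0 ≤ l1 v :=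
  Finset.sum_nonneg fun i _ => abs_nonneg _

lemma l1_sub_le {α : Type*} [Fintype α] (a b : α → ℝ) :
    l1 a - l1 b ≤ l1 (fun i => a i - b i) := by
  rw [sub_le_iff_le_add]
  unfold l1
  rw [← Finset.sum_add_distrib]
  exact Finset.sum_le_sum fun i _ => by
    have := abs_sub_abs_le_abs_sub (a i) (b i); linarith

lemma col_le_ml1 {α β : Type*} [Fintype α] [Fintype β] (M : Matrix α β ℝ) (j : β) :
    ∑ i, |M i j| ≤ ml1 M :=
  le_csSup ((Set.finite_range _).bddAbove) (Set.mem_range_self j)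

lemma ml1_le {α β : Type*} [Fintype α] [Fintype β] (M : Matrix α β ℝ) (c : ℝ)
    (hc : 0 ≤ c) (h : ∀ j, ∑ i, |M i j| ≤ c) : ml1 M ≤ c :=
  Real.sSup_le (by rintro x ⟨j, rfl⟩; exact h j) hc

lemma l1_comb_le {α β : Type*} [Fintype α] [Fintype β] (W : Matrix α β ℝ) (c : β → ℝ) :
    l1 (fun i => ∑ k, c k * W i k) ≤ ∑ k, |c k| * l1 (fun i => W i k) := by
  unfold l1
  calc ∑ i, |∑ k, c k * W i k| ≤ ∑ i, ∑ k, |c k * W i k| :=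
        Finset.sum_le_sum fun i _ => Finset.abs_sum_le_sum_abs _ _
    _ = ∑ k, |c k| * ∑ i, |W i k| := by
        rw [Finset.sum_comm]
        exact Finset.sum_congr rfl fun k _ => by
          rw [Finset.mul_sum]
          exact Finset.sum_congr rfl fun i _ => abs_mul _ _


set_option maxHeartbeats 2000000 in
/-- Score of each anchor: score(T_j, p) ≥ 1 − 16ε/(κμ(1−ε)). -/
theorem anchor_score_bound
    {d r m : ℕ} (W : Matrix (Fin d) (Fin r) ℝ) (Hbar : Matrix (Fin r) (Fin m) ℝ)
    (σ : Equiv.Perm (Fin r ⊕ Fin m))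
    (N A V : Matrix (Fin d) (Fin r ⊕ Fin m) ℝ)
    (H : Matrix (Fin r) (Fin r ⊕ Fin m) ℝ) (ε : ℝ)
    (hW : ∀ i j, 0 ≤ W i j) (hHbar : ∀ i j, 0 ≤ Hbar i j)
    (hH : H = fun j u => Matrix.fromCols (1 : Matrix (Fin r) (Fin r) ℝ) Hbar j (σ u))
    (hV : V = W * H) (hA : A = V + N)
    (hVcol : ∀ u, l1 (fun i => V i u) = 1)
    (hWcol : ∀ j, l1 (fun i => W i j) = 1)
    (hHcol : ∀ u, l1 (fun j => H j u) = 1)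
    (hε0 : 0 ≤ ε) (hε1 : ε < 1) (hN : ml1 N ≤ ε)
    (Xopt : Matrix (Fin r ⊕ Fin m) (Fin r ⊕ Fin m) ℝ)
    (hfeas : Feas Xopt r)
    (hopt : ∀ X : Matrix (Fin r ⊕ Fin m) (Fin r ⊕ Fin m) ℝ,
      Feas X r → ml1 (A - A * Xopt) ≤ ml1 (A - A * X))
    (μ : ℝ) (hκ : 0 < kappa W) (hμ : μ ≠ 0) (hεμ : ε ≤ μ) :
    ∀ j : Fin r,
      1 - 16 * ε / (kappa W * μ * (1 - ε)) ≤
        ∑ u, (if l1 (fun k => A k u - W k j) ≤ 2 * μ then Xopt u u else 0) := by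
  intro j
  obtain ⟨htr, hd1, hnn, hdd⟩ := hfeas
  have hμ0 : 0 < μ := lt_of_le_of_ne (hε0.trans hεμ) (Ne.symm hμ)
  have hεlt : (0:ℝ) < 1 - ε := by linarith
  have hH0 : ∀ k u, 0 ≤ H k u := by
    intro k u
    rw [hH]
    show 0 ≤ Matrix.fromCols 1 Hbar k (σ u)
    rcases hsu : σ u with j' | j'
    · rw [Matrix.fromCols_apply_inl, Matrix.one_apply]
      split <;> norm_num
    · rw [Matrix.fromCols_apply_inr]
      exact hHbar k j'
  have hHsum : ∀ u, ∑ k, H k u = 1 := by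
    intro u
    rw [← hHcol u]
    exact Finset.sum_congr rfl fun k _ => (abs_of_nonneg (hH0 k u)).symm
  have hH1 : ∀ k u, H k u ≤ 1 := by
    intro k u
    rw [← hHsum u]
    exact Finset.single_le_sum (fun k _ => hH0 k u) (Finset.mem_univ k)
  have hWsum : ∀ k, ∑ i, W i k = 1 := by
    intro k
    rw [← hWcol k]
    exact Finset.sum_congr rfl fun i _ => (abs_of_nonneg (hW i k)).symm
  have hAexp : ∀ i u, A i u = (∑ k, W i k * H k u) + N i u := by
    intro i u
    rw [hA, hV]
    simp [Matrix.add_apply, Matrix.mul_apply]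
  have Ncol : ∀ u, ∑ i, |N i u| ≤ ε := fun u => (col_le_ml1 N u).trans hN
  -- pure columns
  set uP : Fin r → (Fin r ⊕ Fin m) := fun k => σ.symm (Sum.inl k) with huP
  have hHuP : ∀ k k', H k' (uP k) = if k' = k then 1 else 0 := by
    intro k k'
    rw [hH]
    simp [huP, Matrix.one_apply]
  -- the comparison matrix Xs
  set Xs : Matrix (Fin r ⊕ Fin m) (Fin r ⊕ Fin m) ℝ :=
    fun u u' => Sum.elim (fun k => H k u') (fun _ => (0:ℝ)) (σ u) with hXs
  have hXsdiag : ∀ u, Xs u u = Sum.elim (fun _ => (1:ℝ)) (fun _ => (0:ℝ)) (σ u) := by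
    intro u
    rcases hsu : σ u with k | k
    · have : H k u = 1 := by
        rw [hH]
        show Matrix.fromCols 1 Hbar k (σ u) = 1
        rw [hsu, Matrix.fromCols_apply_inl, Matrix.one_apply_eq]
      simp [hXs, hsu, this]
    · simp [hXs, hsu]
  have hfeasXs : Feas Xs r := by
    refine ⟨?_, ?_, ?_, ?_⟩
    · show ∑ u, Xs u u = (r:ℝ)
      rw [← Equiv.sum_comp σ.symm (fun u => Xs u u)]
      have : ∀ w, Xs (σ.symm w) (σ.symm w) = Sum.elim (fun _ => (1:ℝ)) (fun _ => (0:ℝ)) w := by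
        intro w
        rw [hXsdiag]
        simp
      rw [Finset.sum_congr rfl (fun w _ => this w)]
      rw [Fintype.sum_sum_type]
      simp
    · intro u
      rw [hXsdiag]
      rcases σ u with k | k <;> simp
    · intro u u'
      show 0 ≤ Sum.elim (fun k => H k u') (fun _ => (0:ℝ)) (σ u)
      rcases σ u with k | k
      · exact hH0 k u'
      · simp
    · intro u u'
      rw [hXsdiag]
      show Sum.elim (fun k => H k u') (fun _ => (0:ℝ)) (σ u) ≤ _
      rcases σ u with k | k
      · exact hH1 k u'
      · simp
  have hAXs : ∀ i u', (A * Xs) i u' = ∑ k, (W i k + N i (uP k)) * H k u' := by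
    intro i u'
    rw [Matrix.mul_apply]
    rw [← Equiv.sum_comp σ.symm (fun u => A i u * Xs u u')]
    have : ∀ w, A i (σ.symm w) * Xs (σ.symm w) u'
        = Sum.elim (fun k => A i (uP k) * H k u') (fun _ => (0:ℝ)) w := by
      intro w
      rcases w with k | k <;> simp [hXs, huP]
    rw [Finset.sum_congr rfl (fun w _ => this w), Fintype.sum_sum_type]
    simp only [Sum.elim_inl, Sum.elim_inr, Finset.sum_const_zero, add_zero]
    refine Finset.sum_congr rfl fun k _ => ?_
    congr 1
    rw [hAexp i (uP k)]
    have : ∑ k', W i k' * H k' (uP k) = W i k := by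
      rw [Finset.sum_congr rfl (fun k' (_ : k' ∈ Finset.univ) => by rw [hHuP k k'])]
      simp
    rw [this]
  have hcolXs : ∀ u', ∑ i, |(A - A * Xs) i u'| ≤ 2 * ε := by
    intro u'
    have hptw : ∀ i, (A - A * Xs) i u' = N i u' - ∑ k, N i (uP k) * H k u' := by
      intro i
      rw [Matrix.sub_apply, hAXs, hAexp]
      rw [Finset.sum_congr rfl (fun k (_ : k ∈ Finset.univ) => add_mul (W i k) (N i (uP k)) (H k u'))]
      rw [Finset.sum_add_distrib]
      ring
    calc ∑ i, |(A - A * Xs) i u'|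
        ≤ ∑ i, (|N i u'| + |∑ k, N i (uP k) * H k u'|) := by
          refine Finset.sum_le_sum fun i _ => ?_
          rw [hptw i]
          exact abs_sub _ _
      _ = (∑ i, |N i u'|) + ∑ i, |∑ k, N i (uP k) * H k u'| := Finset.sum_add_distrib
      _ ≤ ε + ε := by
          refine add_le_add (Ncol u') ?_
          have h1 : l1 (fun i => ∑ k, H k u' * (fun i k => N i (uP k)) i k)
              ≤ ∑ k, |H k u'| * l1 (fun i => N i (uP k)) := l1_comb_le _ _
          unfold l1 at h1
          calc ∑ i, |∑ k, N i (uP k) * H k u'|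
              = ∑ i, |∑ k, H k u' * N i (uP k)| := by
                refine Finset.sum_congr rfl fun i _ => ?_
                congr 1
                exact Finset.sum_congr rfl fun k _ => mul_comm _ _
            _ ≤ ∑ k, |H k u'| * ∑ i, |N i (uP k)| := h1
            _ ≤ ∑ k, H k u' * ε := by
                refine Finset.sum_le_sum fun k _ => ?_
                rw [abs_of_nonneg (hH0 k u')]
                exact mul_le_mul_of_nonneg_left (Ncol (uP k)) (hH0 k u')
            _ = ε := by rw [← Finset.sum_mul, hHsum u', one_mul]
      _ = 2 * ε := by ring
  have hopt2 : ml1 (A - A * Xopt) ≤ 2 * ε :=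
    (hopt Xs hfeasXs).trans (ml1_le _ _ (by linarith) hcolXs)
  -- the column of Xopt at the pure column of j
  set uj : Fin r ⊕ Fin m := uP j with hujdef
  set x : (Fin r ⊕ Fin m) → ℝ := fun u => Xopt u uj with hxdef
  set s : ℝ := ∑ u, x u with hsdef
  set y : Fin r → ℝ := fun k => ∑ u, H k u * x u with hydef
  have hx0 : ∀ u, 0 ≤ x u := fun u => hnn u uj
  have hs0 : 0 ≤ s := Finset.sum_nonneg fun u _ => hx0 u
  have hy0 : ∀ k, 0 ≤ y k := fun k =>
    Finset.sum_nonneg fun u _ => mul_nonneg (hH0 k u) (hx0 u)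
  have hsy : ∑ k, y k = s := by
    rw [hsdef, hydef]
    rw [Finset.sum_comm]
    refine Finset.sum_congr rfl fun u _ => ?_
    rw [← Finset.sum_mul, hHsum u, one_mul]
  have hcol : ∑ i, |A i uj - ∑ u, A i u * Xopt u uj| ≤ 2 * ε := by
    have := (col_le_ml1 (A - A * Xopt) uj).trans hopt2
    simpa [Matrix.sub_apply, Matrix.mul_apply] using this
  -- the residual at the pure column
  set ηb : ℝ := l1 (fun i => W i j - ∑ k, W i k * y k) with hηbdef
  have hηb0 : 0 ≤ ηb := l1_nonneg _
  have hηb : ηb ≤ 3 * ε + ε * s := by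
    have hptw : ∀ i, W i j - ∑ k, W i k * y k
        = (A i uj - ∑ u, A i u * Xopt u uj) - N i uj + ∑ u, N i u * x u := by
      intro i
      have h1 : A i uj = W i j + N i uj := by
        rw [hAexp i uj]
        congr 1
        rw [Finset.sum_congr rfl (fun k' (_ : k' ∈ Finset.univ) => by rw [hujdef, hHuP j k'])]
        simp
      have h2 : ∑ u, A i u * Xopt u uj = (∑ k, W i k * y k) + ∑ u, N i u * x u := by
        have : ∀ u, A i u * Xopt u uj = (∑ k, W i k * (H k u * x u)) + N i u * x u := by
          intro u
          show A i u * x u = _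
          rw [hAexp i u, add_mul, Finset.sum_mul]
          congr 1
          exact Finset.sum_congr rfl fun k _ => by ring
        rw [Finset.sum_congr rfl fun u (_ : u ∈ Finset.univ) => this u, Finset.sum_add_distrib]
        congr 1
        rw [Finset.sum_comm]
        refine Finset.sum_congr rfl fun k _ => ?_
        rw [hydef, Finset.mul_sum]
      rw [h1, h2]
      ring
    calc ηb = ∑ i, |(A i uj - ∑ u, A i u * Xopt u uj) - N i uj + ∑ u, N i u * x u| := by
          rw [hηbdef]
          unfold l1
          refine Finset.sum_congr rfl fun i _ => ?_
          show |W i j - ∑ k, W i k * y k| = _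
          rw [hptw i]
      _ ≤ ∑ i, (|A i uj - ∑ u, A i u * Xopt u uj| + |N i uj| + |∑ u, N i u * x u|) := by
          refine Finset.sum_le_sum fun i _ => ?_
          calc |(A i uj - ∑ u, A i u * Xopt u uj) - N i uj + ∑ u, N i u * x u|
              ≤ |(A i uj - ∑ u, A i u * Xopt u uj) - N i uj| + |∑ u, N i u * x u| :=
                abs_add_le _ _
            _ ≤ |A i uj - ∑ u, A i u * Xopt u uj| + |N i uj| + |∑ u, N i u * x u| := by
                have := abs_sub (A i uj - ∑ u, A i u * Xopt u uj) (N i uj)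
                linarith
      _ = (∑ i, |A i uj - ∑ u, A i u * Xopt u uj|) + (∑ i, |N i uj|)
            + ∑ i, |∑ u, N i u * x u| := by
          rw [← Finset.sum_add_distrib, ← Finset.sum_add_distrib]
      _ ≤ 2 * ε + ε + ε * s := by
          refine add_le_add (add_le_add hcol (Ncol uj)) ?_
          have h1 : l1 (fun i => ∑ u, x u * N i u) ≤ ∑ u, |x u| * l1 (fun i => N i u) :=
            l1_comb_le N x
          unfold l1 at h1
          calc ∑ i, |∑ u, N i u * x u| = ∑ i, |∑ u, x u * N i u| := by
                refine Finset.sum_congr rfl fun i _ => ?_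
                congr 1
                exact Finset.sum_congr rfl fun u _ => mul_comm _ _
            _ ≤ ∑ u, |x u| * ∑ i, |N i u| := h1
            _ ≤ ∑ u, x u * ε := Finset.sum_le_sum fun u _ => by
                rw [abs_of_nonneg (hx0 u)]
                exact mul_le_mul_of_nonneg_left (Ncol u) (hx0 u)
            _ = ε * s := by rw [← Finset.sum_mul, hsdef]; ring
      _ = 3 * ε + ε * s := by ring
  -- norm of W y equals s
  have hWy : ∑ i, |∑ k, W i k * y k| = s := by
    calc ∑ i, |∑ k, W i k * y k| = ∑ i, ∑ k, W i k * y k := by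
          refine Finset.sum_congr rfl fun i _ => abs_of_nonneg ?_
          exact Finset.sum_nonneg fun k _ => mul_nonneg (hW i k) (hy0 k)
      _ = ∑ k, (∑ i, W i k) * y k := by
          rw [Finset.sum_comm]
          exact Finset.sum_congr rfl fun k _ => (Finset.sum_mul _ _ _).symm
      _ = s := by
          rw [← hsy]
          exact Finset.sum_congr rfl fun k _ => by rw [hWsum k, one_mul]
  -- |s - 1| ≤ ηb
  have hs1 : s - 1 ≤ ηb := by
    have h := l1_sub_le (fun i => ∑ k, W i k * y k) (fun i => W i j)
    have e1 : l1 (fun i => ∑ k, W i k * y k) = s := hWy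
    have e2 : l1 (fun i => (∑ k, W i k * y k) - W i j) = ηb := by
      rw [hηbdef]
      unfold l1
      exact Finset.sum_congr rfl fun i _ => by rw [abs_sub_comm]
    rw [e1, hWcol j, e2] at h
    exact h
  have h1s : 1 - s ≤ ηb := by
    have h := l1_sub_le (fun i => W i j) (fun i => ∑ k, W i k * y k)
    rw [hWcol j] at h
    have e1 : l1 (fun i => ∑ k, W i k * y k) = s := hWy
    rw [e1] at h
    exact h
  have hsub : s * (1 - ε) ≤ 1 + 3 * ε := by nlinarith
  have hE : ηb * (1 - ε) ≤ 4 * ε := by nlinarith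
  -- kappa facts
  set κ : ℝ := kappa W with hκdef
  have hSbdd : BddBelow {c | ∃ (j : Fin r) (z : Fin r → ℝ), (∀ k, 0 ≤ z k) ∧ z j = 0 ∧
      c = l1 (fun i => W i j - ∑ k, W i k * z k)} := by
    refine ⟨0, ?_⟩
    rintro c ⟨j', z, _, _, rfl⟩
    exact l1_nonneg _
  have hκ1 : κ ≤ 1 := by
    rw [hκdef]
    unfold kappa
    have : (1:ℝ) ∈ {c | ∃ (j : Fin r) (z : Fin r → ℝ), (∀ k, 0 ≤ z k) ∧ z j = 0 ∧
        c = l1 (fun i => W i j - ∑ k, W i k * z k)} := by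
      refine ⟨j, 0, fun k => le_refl 0, rfl, ?_⟩
      rw [← hWcol j]
      unfold l1
      exact Finset.sum_congr rfl fun i _ => by simp
    exact csInf_le hSbdd this
  -- kappa * (1 - y j) ≤ ηb
  have hyj : κ * (1 - y j) ≤ ηb := by
    rcases le_or_gt (1 - y j) 0 with ht | ht
    · exact (mul_nonpos_of_nonneg_of_nonpos (le_of_lt hκ) ht).trans hηb0
    · set t : ℝ := 1 - y j with htdef
      set z : Fin r → ℝ := fun k => if k = j then 0 else y k / t with hzdef
      have hz0 : ∀ k, 0 ≤ z k := by
        intro k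
        rw [hzdef]
        by_cases h : k = j
        · simp [h]
        · simp only [h, if_false]
          exact div_nonneg (hy0 k) ht.le
      have hsumz : ∀ i, ∑ k, W i k * z k = (∑ k, W i k * y k) / t - W i j * (y j / t) := by
        intro i
        have : ∀ k, W i k * z k = W i k * (y k / t) - (if k = j then W i j * (y j / t) else 0) := by
          intro k
          by_cases h : k = j
          · simp [hzdef, h]
          · simp [hzdef, h]
        rw [Finset.sum_congr rfl fun k (_ : k ∈ Finset.univ) => this k]
        rw [Finset.sum_sub_distrib]
        simp only [Finset.sum_ite_eq', Finset.mem_univ, if_true]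
        congr 1
        rw [Finset.sum_div]
        exact Finset.sum_congr rfl fun k _ => (mul_div_assoc _ _ _).symm
      have hmem : ηb / t ∈ {c | ∃ (j : Fin r) (z : Fin r → ℝ), (∀ k, 0 ≤ z k) ∧ z j = 0 ∧
          c = l1 (fun i => W i j - ∑ k, W i k * z k)} := by
        refine ⟨j, z, hz0, by simp [hzdef], ?_⟩
        rw [hηbdef]
        unfold l1
        rw [Finset.sum_div]
        refine Finset.sum_congr rfl fun i _ => ?_
        show |W i j - ∑ k, W i k * y k| / t = |W i j - ∑ k, W i k * z k|
        have htne : t ≠ 0 := ne_of_gt ht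
        rw [hsumz i, ← abs_of_pos ht, ← abs_div]
        congr 1
        have h1 : y j = 1 - t := by rw [htdef]; ring
        field_simp
        rw [h1, abs_of_pos ht]
        ring
      have hκle : κ ≤ ηb / t := by
        rw [hκdef]
        unfold kappa
        exact csInf_le hSbdd hmem
      calc κ * t ≤ (ηb / t) * t := mul_le_mul_of_nonneg_right hκle ht.le
        _ = ηb := by field_simp
  -- off-anchor columns have small H j u
  set q : ℝ := μ - ε / 2 with hqdef
  have hq0 : 0 < q := by rw [hqdef]; linarith
  have hVW : ∀ u, l1 (fun i => V i u - W i j) ≤ 2 * (1 - H j u) := by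
    intro u
    have hptw : (fun i => V i u - W i j)
        = fun i => ∑ k, (H k u - if k = j then 1 else 0) * W i k := by
      funext i
      rw [hV]
      simp only [Matrix.mul_apply]
      rw [Finset.sum_congr rfl fun k (_ : k ∈ Finset.univ) => sub_mul (H k u) _ (W i k),
        Finset.sum_sub_distrib]
      simp only [ite_mul, one_mul, zero_mul, Finset.sum_ite_eq', Finset.mem_univ, if_true]
      congr 1
      exact Finset.sum_congr rfl fun k _ => mul_comm _ _
    rw [hptw]
    refine (l1_comb_le W _).trans ?_
    have e1 : ∀ k, |H k u - if k = j then 1 else 0| * l1 (fun i => W i k)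
        = H k u + (if k = j then 1 - 2 * H j u else 0) := by
      intro k
      rw [hWcol k, mul_one]
      by_cases h : k = j
      · simp only [h, if_true]
        rw [abs_of_nonpos (by linarith [hH1 j u])]
        ring
      · simp only [h, if_false]
        rw [sub_zero, abs_of_nonneg (hH0 k u), add_zero]
    rw [Finset.sum_congr rfl fun k (_ : k ∈ Finset.univ) => e1 k, Finset.sum_add_distrib,
      hHsum u]
    simp only [Finset.sum_ite_eq', Finset.mem_univ, if_true]
    linarith
  have hoff : ∀ u, ¬ (l1 (fun k => A k u - W k j) ≤ 2 * μ) → H j u ≤ 1 - q := by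
    intro u hu
    push_neg at hu
    have h1 : l1 (fun k => A k u - W k j) ≤ l1 (fun i => V i u - W i j) + ε := by
      have hpt : ∀ i, A i u - W i j = (V i u - W i j) + N i u := by
        intro i
        rw [hA, Matrix.add_apply]
        ring
      calc l1 (fun k => A k u - W k j) = ∑ i, |(V i u - W i j) + N i u| := by
            unfold l1
            refine Finset.sum_congr rfl fun i _ => ?_
            show |A i u - W i j| = _
            rw [hpt i]
        _ ≤ ∑ i, (|V i u - W i j| + |N i u|) := Finset.sum_le_sum fun i _ => abs_add_le _ _
        _ = (∑ i, |V i u - W i j|) + ∑ i, |N i u| := Finset.sum_add_distrib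
        _ ≤ l1 (fun i => V i u - W i j) + ε := add_le_add (le_of_eq rfl) (Ncol u)
    have h2 := hVW u
    rw [hqdef]
    linarith
  -- the anchor mass in the column of Xopt
  set P : ℝ := ∑ u, (if l1 (fun k => A k u - W k j) ≤ 2 * μ then x u else 0) with hPdef
  have hPsum : P ≤ ∑ u, (if l1 (fun k => A k u - W k j) ≤ 2 * μ then Xopt u u else 0) := by
    rw [hPdef]
    refine Finset.sum_le_sum fun u _ => ?_
    by_cases h : l1 (fun k => A k u - W k j) ≤ 2 * μ
    · rw [if_pos h, if_pos h]
      exact hdd u uj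
    · rw [if_neg h, if_neg h]
  have hyP : y j ≤ q * P + (1 - q) * s := by
    have h1 : y j ≤ ∑ u, (q * (if l1 (fun k => A k u - W k j) ≤ 2 * μ then x u else 0)
        + (1 - q) * x u) := by
      show ∑ u, H j u * x u ≤ _
      refine Finset.sum_le_sum fun u _ => ?_
      by_cases h : l1 (fun k => A k u - W k j) ≤ 2 * μ
      · rw [if_pos h]
        have h1 := hH1 j u
        have h2 := hx0 u
        nlinarith
      · rw [if_neg h]
        have h1 := hoff u h
        have h2 := hx0 u
        nlinarith
    rw [Finset.sum_add_distrib, ← Finset.mul_sum, ← Finset.mul_sum] at h1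
    exact h1
  have hP0 : 0 ≤ P := by
    rw [hPdef]
    refine Finset.sum_nonneg fun u _ => ?_
    split
    · exact hx0 u
    · exact le_refl 0
  have hsyj : y j ≤ s := by
    rw [← hsy]
    exact Finset.single_le_sum (fun k _ => hy0 k) (Finset.mem_univ j)
  -- put everything together
  set E : ℝ := 4 * ε / (1 - ε) with hEdef
  have hE0 : 0 ≤ E := div_nonneg (by linarith) hεlt.le
  have hκy : κ * (1 - y j) ≤ E := by
    refine hyj.trans ?_
    rw [hEdef, le_div_iff₀ hεlt]
    exact hE
  have hsE : s ≤ 1 + E := by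
    have h1 : s ≤ (1 + 3 * ε) / (1 - ε) := by
      rw [le_div_iff₀ hεlt]
      exact hsub
    have h2 : (1 + 3 * ε) / (1 - ε) = 1 + E := by
      rw [hEdef]
      field_simp
      ring
    linarith
  by_cases hμ32 : (3:ℝ)/2 ≤ μ
  · -- every column is an anchor
    have hall : ∀ u, l1 (fun k => A k u - W k j) ≤ 2 * μ := by
      intro u
      have h1 : l1 (fun k => A k u - W k j) ≤ ε + 1 + 1 := by
        calc l1 (fun k => A k u - W k j) ≤ ∑ i, (|N i u| + (|V i u| + |W i j|)) := by
              unfold l1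
              refine Finset.sum_le_sum fun i _ => ?_
              show |A i u - W i j| ≤ _
              have hpt : A i u - W i j = N i u + (V i u - W i j) := by
                rw [hA, Matrix.add_apply]
                ring
              rw [hpt]
              refine (abs_add_le _ _).trans (add_le_add_right ?_ _)
              exact (abs_sub _ _)
          _ = (∑ i, |N i u|) + ((∑ i, |V i u|) + ∑ i, |W i j|) := by
              rw [Finset.sum_add_distrib]
              congr 1
              exact Finset.sum_add_distrib
          _ ≤ ε + 1 + 1 := by
              have e1 := hVcol u
              have e2 := hWcol j
              unfold l1 at e1 e2
              rw [e1, e2]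
              linarith [Ncol u]
      linarith
    have hsumr : ∑ u, (if l1 (fun k => A k u - W k j) ≤ 2 * μ then Xopt u u else 0)
        = (r:ℝ) := by
      rw [← htr]
      have : Matrix.trace Xopt = ∑ u, Xopt u u := by
        simp [Matrix.trace, Matrix.diag]
      rw [this]
      exact Finset.sum_congr rfl fun u _ => by rw [if_pos (hall u)]
    rw [hsumr]
    have hr1 : (1:ℝ) ≤ (r:ℝ) := by
      have := j.pos
      exact_mod_cast this
    have hB0 : 0 ≤ 16 * ε / (κ * μ * (1 - ε)) :=
      div_nonneg (by linarith) (mul_nonneg (mul_nonneg hκ.le hμ0.le) hεlt.le)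
    linarith
  · push_neg at hμ32
    have hq2 : μ ≤ 2 * q := by rw [hqdef]; linarith
    have hcore : (1 - P) * (κ * μ) ≤ 4 * E := by
      rcases le_or_gt (1 - P) 0 with h | h
      · have : (1 - P) * (κ * μ) ≤ 0 :=
          mul_nonpos_of_nonpos_of_nonneg h (mul_pos hκ hμ0).le
        linarith
      · rcases le_or_gt 1 q with hq1 | hq1
        · -- q ≥ 1 : P ≥ y j
          have hPy : y j ≤ P := by
            nlinarith [hyP, hsyj, hq0, mul_nonneg (by linarith : (0:ℝ) ≤ q - 1)
              (by linarith : (0:ℝ) ≤ s - y j)]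
          nlinarith [hκy, hPy, hκ, hμ0, hE0, hμ32,
            mul_nonneg (mul_pos hκ hμ0).le (by linarith : (0:ℝ) ≤ P - y j),
            mul_nonneg hμ0.le (by linarith [hκy] : (0:ℝ) ≤ E - κ * (1 - y j)),
            mul_nonneg hE0 (by linarith : (0:ℝ) ≤ 4 - μ)]
        · -- q < 1
          have h1 := mul_le_mul_of_nonneg_left hyP hκ.le
          have h2 : κ * (1 - q) * s ≤ κ * (1 - q) * (1 + E) :=
            mul_le_mul_of_nonneg_left hsE (mul_nonneg hκ.le (by linarith))
          have h3 : κ - E ≤ κ * y j := by nlinarith [hκy]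
          have h4 : κ * q * (1 - P) ≤ E + κ * (1 - q) * E := by nlinarith [h1, h2, h3]
          have h5 : κ * (1 - q) ≤ 1 := by nlinarith [hκ1, hκ.le, hq0]
          nlinarith [h4, h5, h, hκ, hE0, hq2, hq0,
            mul_nonneg (mul_nonneg h.le hκ.le) (by linarith : (0:ℝ) ≤ 2 * q - μ),
            mul_nonneg hE0 (by linarith [h5] : (0:ℝ) ≤ 1 - κ * (1 - q))]
    have hκμ : 0 < κ * μ := mul_pos hκ hμ0
    have heq : 16 * ε / (κ * μ * (1 - ε)) = 4 * E / (κ * μ) := by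
      rw [hEdef]
      field_simp
      ring
    have h6 : 1 - P ≤ 4 * E / (κ * μ) := by
      rw [le_div_iff₀ hκμ]
      exact hcore
    calc 1 - 16 * ε / (κ * μ * (1 - ε)) ≤ P := by rw [heq]; linarith
      _ ≤ _ := hPsum
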